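/- Let Ω ⊆ EuclideanSpace ℝ (Fin 3) be a compact set and m : EuclideanSpace ℝ (Fin 3) → EuclideanSpace ℝ (Fin 3) a bounded measurable vector field vanishing outside Ω. For x ∉ Ω, define the vector Newton potential componentwise by (∫_Ω m(y)/‖x−y‖ dy) ∈ EuclideanSpace ℝ (Fin 3). Then for every x ∉ Ω, this vector field is differentiable at x and its divergence satisfies ∇_x · ∫_Ω m(y)/‖x−y‖ dy = −∫_Ω ⟨m(y), (x−y)/‖x−y‖³⟩ dy. Consequently the two representations of the magnetic scalar potential, φ(x) = (1/4π) ∫_Ω ⟨m(y), (x−y)⟩/‖x−y‖³ dy and φ(x) = −(1/4π) ∇_x · ∫_Ω m(y)/‖x−y‖ dy, agree at every x ∉ Ω. -/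

import Mathlib

open MeasureTheory BigOperators Real
open scoped RealInnerProductSpace
set_option maxHeartbeats 1000000

noncomputable abbrev E3 := EuclideanSpace ℝ (Fin 3)

lemma aux_hasFDerivAt_norm_sub (y z : E3) (h : z ≠ y) :
    HasFDerivAt (fun w : E3 => ‖w - y‖) ((‖z - y‖)⁻¹ • innerSL ℝ (z - y)) z := by
  have hne : ‖z - y‖ ≠ 0 := by simpa [sub_eq_zero] using h
  have h1 : HasFDerivAt (fun w : E3 => w - y) (ContinuousLinearMap.id ℝ E3) z :=
    (hasFDerivAt_id z).sub_const y
  have h2 := h1.norm_sq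
  have h3 := h2.sqrt (pow_ne_zero 2 hne)
  have hfun : (fun w : E3 => √(‖w - y‖ ^ 2)) = fun w : E3 => ‖w - y‖ :=
    funext fun w => Real.sqrt_sq (norm_nonneg _)
  have hder : (1 / (2 * √(‖z - y‖ ^ 2))) •
      (2 • (innerSL ℝ (z - y)).comp (ContinuousLinearMap.id ℝ E3)) =
      (‖z - y‖)⁻¹ • innerSL ℝ (z - y) := by
    ext v
    simp [Real.sqrt_sq (norm_nonneg (z - y))]
    field_simp
  rw [hfun, hder] at h3
  exact h3

lemma aux_hasFDerivAt_inv_norm_sub (y z : E3) (h : z ≠ y) :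
    HasFDerivAt (fun w : E3 => (‖w - y‖)⁻¹)
      ((-(‖z - y‖ ^ 3)⁻¹) • innerSL ℝ (z - y)) z := by
  have hne : ‖z - y‖ ≠ 0 := by simpa [sub_eq_zero] using h
  have h4 := aux_hasFDerivAt_norm_sub y z h
  have h5 := (hasDerivAt_inv hne).comp_hasFDerivAt z h4
  have : (-(‖z - y‖ ^ 2)⁻¹) • ((‖z - y‖)⁻¹ • innerSL ℝ (z - y)) =
      (-(‖z - y‖ ^ 3)⁻¹) • innerSL ℝ (z - y) := by
    rw [smul_smul]
    congr 1
    field_simp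
  rw [this] at h5
  exact h5

noncomputable def Fker (m : E3 → E3) (z y : E3) : E3 →L[ℝ] E3 :=
  ((-(‖z - y‖ ^ 3)⁻¹) • innerSL ℝ (z - y)).smulRight (m y)

lemma aux_hasFDerivAt_kernel (m : E3 → E3) (y z : E3) (h : z ≠ y) :
    HasFDerivAt (fun w : E3 => (‖w - y‖)⁻¹ • m y) (Fker m z y) z :=
  (aux_hasFDerivAt_inv_norm_sub y z h).smul_const (m y)

lemma aux_norm_Fker_le (m : E3 → E3) (z y : E3) :
    ‖Fker m z y‖ ≤ (‖z - y‖ ^ 2)⁻¹ * ‖m y‖ := by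
  rw [Fker, ContinuousLinearMap.norm_smulRight_apply]
  gcongr
  rw [norm_smul, innerSL_apply_norm]
  rcases eq_or_ne (‖z - y‖) 0 with h | h
  · simp [h]
  · rw [norm_neg, norm_inv, Real.norm_eq_abs, abs_pow, abs_norm]
    rw [pow_succ, mul_inv, mul_assoc, inv_mul_cancel₀ h, mul_one]

lemma aux_Fker_apply (m : E3 → E3) (z y : E3) (v : E3) :
    Fker m z y v = (-(‖z - y‖ ^ 3)⁻¹ * ⟪z - y, v⟫) • m y := by
  simp [Fker, ContinuousLinearMap.smulRight_apply, sub_mul, Finset.sum_sub_distrib]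
  rw [inner_sub_left]

theorem divergence_of_vector_newton_potential
    (Ω : Set (EuclideanSpace ℝ (Fin 3))) (hΩ : IsCompact Ω)
    (m : EuclideanSpace ℝ (Fin 3) → EuclideanSpace ℝ (Fin 3)) (hm : Measurable m)
    (M : ℝ) (hmbd : ∀ y, ‖m y‖ ≤ M)
    (hm0 : ∀ y ∉ Ω, m y = 0)
    (F : EuclideanSpace ℝ (Fin 3) → EuclideanSpace ℝ (Fin 3))
    (hF : F = fun z => ∫ y in Ω, (‖z - y‖)⁻¹ • m y)
    (x : EuclideanSpace ℝ (Fin 3)) (hx : x ∉ Ω) :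
    DifferentiableAt ℝ F x ∧
      (∑ i : Fin 3, fderiv ℝ (fun z => F z i) x (EuclideanSpace.single i (1 : ℝ))) =
        -∫ y in Ω, ⟪m y, (‖x - y‖ ^ 3)⁻¹ • (x - y)⟫ ∧
      (1 / (4 * π)) * (∫ y in Ω, ⟪m y, x - y⟫ / ‖x - y‖ ^ 3) =
        -(1 / (4 * π)) *
          ∑ i : Fin 3, fderiv ℝ (fun z => F z i) x (EuclideanSpace.single i (1 : ℝ)) := by
  have hΩmeas : MeasurableSet Ω := hΩ.isClosed.measurableSet
  haveI : IsFiniteMeasure ((volume : Measure E3).restrict Ω) :=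
    ⟨by rw [Measure.restrict_apply_univ]; exact hΩ.measure_lt_top⟩
  obtain ⟨ε, εpos, hball⟩ := Metric.isOpen_iff.mp hΩ.isClosed.isOpen_compl x hx
  have hεhalf : 0 < ε / 2 := by linarith
  have hdist : ∀ z ∈ Metric.ball x (ε / 2), ∀ y ∈ Ω, ε / 2 ≤ ‖z - y‖ := by
    intro z hz y hy
    by_contra hlt
    push_neg at hlt
    have hmem : y ∈ Metric.ball x ε := by
      have h1 : dist y z < ε / 2 := by rwa [dist_comm, dist_eq_norm]
      have h2 : dist z x < ε / 2 := hz
      calc dist y x ≤ dist y z + dist z x := dist_triangle _ _ _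
        _ < ε / 2 + ε / 2 := add_lt_add h1 h2
        _ = ε := by ring
    exact hball hmem hy
  have hne' : ∀ z ∈ Metric.ball x (ε / 2), ∀ y ∈ Ω, z ≠ y := by
    intro z hz y hy h
    exact hball (Metric.ball_subset_ball (by linarith) hz) (h ▸ hy)
  have hsm : ∀ z : E3, AEStronglyMeasurable (fun y => (‖z - y‖)⁻¹ • m y)
      ((volume : Measure E3).restrict Ω) := fun z =>
    (((continuous_const.sub continuous_id).norm.measurable.inv).aestronglyMeasurable.smul
      hm.aestronglyMeasurable)
  have hF'sm : AEStronglyMeasurable (fun y => Fker m x y)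
      ((volume : Measure E3).restrict Ω) := by
    have hc : AEStronglyMeasurable
        (fun y : E3 => (-(‖x - y‖ ^ 3)⁻¹) • innerSL ℝ (x - y))
        ((volume : Measure E3).restrict Ω) := by
      refine AEStronglyMeasurable.fun_smul ?_ ?_
      · exact (((continuous_const.sub continuous_id).norm.pow 3).measurable.inv.neg).aestronglyMeasurable
      · exact ((innerSL ℝ).continuous.comp
          (continuous_const.sub continuous_id)).aestronglyMeasurable
    have hcont : Continuous fun p : (E3 →L[ℝ] ℝ) × E3 =>
        (ContinuousLinearMap.smulRightL ℝ E3 E3) p.1 p.2 :=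
      (ContinuousLinearMap.smulRightL ℝ E3 E3).isBoundedBilinearMap.continuous
    exact hcont.comp_aestronglyMeasurable (hc.prodMk hm.aestronglyMeasurable)
  have hFint : Integrable (fun y => (‖x - y‖)⁻¹ • m y) ((volume : Measure E3).restrict Ω) := by
    refine Integrable.mono' (integrable_const ((ε / 2)⁻¹ * M)) (hsm x) ?_
    filter_upwards [ae_restrict_mem hΩmeas] with y hy
    rw [norm_smul, norm_inv, norm_norm]
    have hd := hdist x (Metric.mem_ball_self hεhalf) y hy
    have h1 : (‖x - y‖)⁻¹ ≤ (ε / 2)⁻¹ := by gcongr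
    exact mul_le_mul h1 (hmbd y) (norm_nonneg _) (inv_nonneg.mpr hεhalf.le)
  have hF'int : Integrable (fun y => Fker m x y) ((volume : Measure E3).restrict Ω) := by
    refine Integrable.mono' (integrable_const (((ε / 2) ^ 2)⁻¹ * M)) hF'sm ?_
    filter_upwards [ae_restrict_mem hΩmeas] with y hy
    refine (aux_norm_Fker_le m x y).trans ?_
    have hd := hdist x (Metric.mem_ball_self hεhalf) y hy
    have h2 : ((‖x - y‖) ^ 2)⁻¹ ≤ ((ε / 2) ^ 2)⁻¹ := by gcongr
    exact mul_le_mul h2 (hmbd y) (norm_nonneg _) (by positivity)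
  have hDer : HasFDerivAt F (∫ y in Ω, Fker m x y) x := by
    rw [hF]
    refine hasFDerivAt_integral_of_dominated_of_fderiv_le
      (F' := fun z y => Fker m z y)
      (bound := fun _ => ((ε / 2) ^ 2)⁻¹ * M) (Metric.ball_mem_nhds x hεhalf)
      (Filter.Eventually.of_forall fun z => hsm z) hFint hF'sm ?_ (integrable_const _) ?_
    · filter_upwards [ae_restrict_mem hΩmeas] with y hy z hz
      refine (aux_norm_Fker_le m z y).trans ?_
      have hd := hdist z hz y hy
      have h2 : ((‖z - y‖) ^ 2)⁻¹ ≤ ((ε / 2) ^ 2)⁻¹ := by gcongr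
      exact mul_le_mul h2 (hmbd y) (norm_nonneg _) (by positivity)
    · filter_upwards [ae_restrict_mem hΩmeas] with y hy z hz
      exact aux_hasFDerivAt_kernel m y z (hne' z hz y hy)
  have hdiff : DifferentiableAt ℝ F x := hDer.differentiableAt
  have hproj : ∀ i : Fin 3, HasFDerivAt (fun z => F z i)
      ((EuclideanSpace.proj i : E3 →L[ℝ] ℝ).comp (∫ y in Ω, Fker m x y)) x := fun i =>
    (EuclideanSpace.proj (𝕜 := ℝ) i).hasFDerivAt.comp x hDer
  have hterm : ∀ i : Fin 3,
      fderiv ℝ (fun z => F z i) x (EuclideanSpace.single i (1 : ℝ)) =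
        ∫ y in Ω, (Fker m x y (EuclideanSpace.single i (1 : ℝ))) i := by
    intro i
    rw [(hproj i).fderiv, ContinuousLinearMap.comp_apply,
      ContinuousLinearMap.integral_apply hF'int]
    exact (ContinuousLinearMap.integral_comp_comm (EuclideanSpace.proj i)
      (hF'int.apply_continuousLinearMap _)).symm
  have hint_i : ∀ i : Fin 3, Integrable
      (fun y => (Fker m x y (EuclideanSpace.single i (1 : ℝ))) i)
      ((volume : Measure E3).restrict Ω) := fun i =>
    (EuclideanSpace.proj (𝕜 := ℝ) i).integrable_comp (hF'int.apply_continuousLinearMap _)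
  have hpt : ∀ y : E3, (∑ i : Fin 3, (Fker m x y (EuclideanSpace.single i (1 : ℝ))) i)
      = -⟪m y, (‖x - y‖ ^ 3)⁻¹ • (x - y)⟫ := by
    intro y
    have hco : ∀ i : Fin 3, (Fker m x y (EuclideanSpace.single i (1 : ℝ))) i
        = -((‖x - y‖ ^ 3)⁻¹ * ((x - y) i * m y i)) := by
      intro i
      rw [aux_Fker_apply]
      have hin : ⟪x - y, EuclideanSpace.single i (1 : ℝ)⟫ = (x - y) i := by
        rw [EuclideanSpace.inner_single_right]; simp
      rw [hin]
      simp [PiLp.smul_apply]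
      ring
    simp_rw [hco]
    rw [Finset.sum_neg_distrib, ← Finset.mul_sum, real_inner_smul_right]
    have hmy : ⟪m y, x - y⟫ = ∑ i : Fin 3, (x - y) i * m y i := by
      rw [real_inner_comm]
      simp [PiLp.inner_apply, RCLike.inner_apply]
      exact Finset.sum_congr rfl fun i _ => mul_comm _ _
    rw [hmy]
  have hdiv : (∑ i : Fin 3, fderiv ℝ (fun z => F z i) x (EuclideanSpace.single i (1 : ℝ)))
      = -∫ y in Ω, ⟪m y, (‖x - y‖ ^ 3)⁻¹ • (x - y)⟫ := by
    calc (∑ i : Fin 3, fderiv ℝ (fun z => F z i) x (EuclideanSpace.single i (1 : ℝ)))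
        = ∑ i : Fin 3, ∫ y in Ω, (Fker m x y (EuclideanSpace.single i (1 : ℝ))) i := by
          exact Finset.sum_congr rfl fun i _ => hterm i
      _ = ∫ y in Ω, ∑ i : Fin 3, (Fker m x y (EuclideanSpace.single i (1 : ℝ))) i :=
          (integral_finset_sum _ fun i _ => hint_i i).symm
      _ = ∫ y in Ω, -⟪m y, (‖x - y‖ ^ 3)⁻¹ • (x - y)⟫ := by simp_rw [hpt]
      _ = -∫ y in Ω, ⟪m y, (‖x - y‖ ^ 3)⁻¹ • (x - y)⟫ := integral_neg _
  refine ⟨hdiff, hdiv, ?_⟩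
  have h3 : (∫ y in Ω, ⟪m y, x - y⟫ / ‖x - y‖ ^ 3)
      = ∫ y in Ω, ⟪m y, (‖x - y‖ ^ 3)⁻¹ • (x - y)⟫ := by
    have he : ∀ y : E3, ⟪m y, x - y⟫ / ‖x - y‖ ^ 3
        = ⟪m y, (‖x - y‖ ^ 3)⁻¹ • (x - y)⟫ := fun y => by
      rw [real_inner_smul_right]; ring
    simp_rw [he]
  rw [h3, hdiv]
  ring
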